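/- arXiv:2205.07445 — 2 statements merged into one kernel-verified Lean document; each statement's English description precedes it below -/
import Mathlib

section
/- Let N be a positive even integer, let L be an integer with 0 < L < N and ⌈N/L⌉ ≥ 3, and let m1, m2, m3 be pairwise distinct integers with 0 ≤ m_j ≤ ⌈N/L⌉ − 1. Let w^(1), w^(2) ∈ ℂ^N be analytic windows such that ŵ^(1)_1 · ŵ^(1)_0 ≠ 0, ŵ^(1)_{N/2} · ŵ^(2)_{N/2} ≠ 0 and ŵ^(1)_0 · ŵ^(2)_{N/2} − ŵ^(2)_0 · ŵ^(1)_{N/2} ≠ 0. Then there exists a nonzero polynomial P in N variables with complex coefficients such that for every x ∈ ℝ^N with P(x) ≠ 0, the analytic signal z = A(x) is determined up to a global sign by its 3N/2 − 1 STFT magnitudes: for every analytic signal z̃ ∈ ℂ^N, if |ŷ^{w(1)}_{N/2, 0}(z̃)| = |ŷ^{w(1)}_{N/2, 0}(z)|, |ŷ^{w(2)}_{N/2, 0}(z̃)| = |ŷ^{w(2)}_{N/2, 0}(z)|, and |ŷ^{w(1)}_{k, m_j}(z̃)| = |ŷ^{w(1)}_{k, m_j}(z)| for all k = 1, …, N/2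 − 1 and j = 1, 2, 3, then z̃ = z or z̃ = −z. -/
open Complex

/-- Discrete Fourier transform of a signal indexed by `ZMod N`. -/
noncomputable def dft {N : ℕ} (z : ZMod N → ℂ) (k : ZMod N) : ℂ :=
  ∑ n ∈ Finset.range N, z n *
    Complex.exp (-2 * (Real.pi : ℂ) * Complex.I * (k.val : ℂ) * (n : ℂ) / N)

/-- Short-time Fourier transform measurement `ŷ^w_{k,m}(z)` with window `w` and
separation parameter `L`. -/
noncomputable def stft {N : ℕ} (w : ZMod N → ℂ) (L : ℤ) (z : ZMod N → ℂ) (k m : ℤ) : ℂ :=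
  ∑ n ∈ Finset.range N, z n * w ((m * L - n : ℤ) : ZMod N) *
    Complex.exp (-2 * (Real.pi : ℂ) * Complex.I * (k : ℂ) * (n : ℂ) / N)

/-- The DFT of the analytic signal associated with a real signal `x`. -/
noncomputable def analyticHat (N : ℕ) (x : ZMod N → ℝ) (k : ℕ) : ℂ :=
  if N % 2 = 0 then
    if k = 0 then dft (fun n => (x n : ℂ)) 0
    else if k ≤ N / 2 - 1 then 2 * dft (fun n => (x n : ℂ)) (k : ZMod N)
    else if k = N / 2 then dft (fun n => (x n : ℂ)) ((N / 2 : ℕ) : ZMod N)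
    else 0
  else
    if k = 0 then dft (fun n => (x n : ℂ)) 0
    else if k ≤ (N - 1) / 2 then 2 * dft (fun n => (x n : ℂ)) (k : ZMod N)
    else 0

/-- The analytic signal `A(x)` of a real signal `x`, obtained by inverse DFT. -/
noncomputable def analyticSignal {N : ℕ} (x : ZMod N → ℝ) : ZMod N → ℂ :=
  fun n => (1 / N : ℂ) * ∑ k ∈ Finset.range N, analyticHat N x k *
    Complex.exp (2 * (Real.pi : ℂ) * Complex.I * (k : ℂ) * (n.val : ℂ) / N)

/-- A signal `z ∈ ℂ^N` is analytic if `z = A(x)` for some real signal `x`. -/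
def IsAnalytic {N : ℕ} (z : ZMod N → ℂ) : Prop := ∃ x : ZMod N → ℝ, z = analyticSignal x

section STFTPRAux
open Complex Finset


noncomputable def ee (N : ℕ) (t : ℤ) : ℂ := Complex.exp (2 * (Real.pi:ℂ) * I * t / N)


lemma ee_add (N : ℕ) (s t : ℤ) : ee N (s + t) = ee N s * ee N t := by
  rw [ee, ee, ee, ← Complex.exp_add]
  congr 1
  push_cast
  ring

lemma ee_zero (N : ℕ) : ee N 0 = 1 := by simp [ee]

lemma ee_int_mul (N : ℕ) (hN : 0 < N) (q : ℤ) : ee N (N * q) = 1 := by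
  rw [ee]
  have hNne : (N:ℂ) ≠ 0 := by exact_mod_cast hN.ne'
  have : 2 * (Real.pi:ℂ) * I * ((N:ℤ) * q : ℤ) / N = (q:ℂ) * (2 * (Real.pi:ℂ) * I) := by
    push_cast
    field_simp
  rw [this, Complex.exp_int_mul_two_pi_mul_I]

lemma ee_pow (N : ℕ) (t : ℤ) (l : ℕ) : ee N (l * t) = (ee N t) ^ l := by
  rw [ee, ee, ← Complex.exp_nat_mul]
  congr 1
  push_cast
  ring

lemma ee_neg_mul (N : ℕ) (t : ℤ) : ee N (-t) * ee N t = 1 := by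
  rw [← ee_add]; simp [ee_zero]

lemma ee_ne_zero (N : ℕ) (t : ℤ) : ee N t ≠ 0 := Complex.exp_ne_zero _

lemma conj_ee (N : ℕ) (t : ℤ) : (starRingEnd ℂ) (ee N t) = ee N (-t) := by
  rw [ee, ee, ← Complex.exp_conj]
  congr 1
  simp only [map_div₀, map_mul, Complex.conj_I, Complex.conj_ofReal, map_ofNat,
    map_intCast, map_natCast]
  push_cast
  ring

lemma ee_eq_one_iff (N : ℕ) (hN : 0 < N) (t : ℤ) : ee N t = 1 ↔ (N:ℤ) ∣ t := by
  constructor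
  · intro h
    rw [ee, Complex.exp_eq_one_iff] at h
    obtain ⟨n, hn⟩ := h
    have hNne : (N:ℂ) ≠ 0 := by exact_mod_cast hN.ne'
    have hpi : (Real.pi:ℂ) ≠ 0 := by exact_mod_cast Real.pi_ne_zero
    have h2 : (2:ℂ) * (Real.pi:ℂ) * I ≠ 0 := by
      simp [Complex.I_ne_zero, hpi]
    have h3 : (2 * (Real.pi:ℂ) * I) * ((t:ℂ)/N) = (2 * (Real.pi:ℂ) * I) * n := by
      linear_combination hn
    have h4 : (t:ℂ)/N = n := mul_left_cancel₀ h2 h3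
    have h5 : (t:ℂ) = n * N := by field_simp at h4; linear_combination h4
    have : t = n * N := by exact_mod_cast h5
    exact ⟨n, by rw [this]; ring⟩
  · rintro ⟨q, rfl⟩
    exact ee_int_mul N hN q

lemma sum_ee (N : ℕ) (hN : 0 < N) (t : ℤ) :
    ∑ n ∈ range N, ee N (t * n) = if (N:ℤ) ∣ t then (N:ℂ) else 0 := by
  by_cases h : (N:ℤ) ∣ t
  · simp only [h, if_true]
    have : ∀ n ∈ range N, ee N (t * n) = 1 := by
      intro n _
      obtain ⟨q, rfl⟩ := h
      rw [show (N:ℤ) * q * n = (N:ℤ) * (q * n) by ring, ee_int_mul N hN]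
    rw [Finset.sum_congr rfl this]
    simp
  · simp only [h, if_false]
    have hx1 : ee N t ≠ 1 := fun hc => h ((ee_eq_one_iff N hN t).1 hc)
    have : ∀ n ∈ range N, ee N (t * n) = (ee N t) ^ n := by
      intro n _
      rw [show t * (n:ℤ) = (n:ℤ) * t by ring, ← ee_pow]
    rw [Finset.sum_congr rfl this, geom_sum_eq hx1]
    have hNpow : (ee N t) ^ N = 1 := by
      rw [← ee_pow, show ((N:ℕ):ℤ) * t = (N:ℤ) * t from rfl, ee_int_mul N hN]
    rw [hNpow]
    simp


lemma ee_val (N : ℕ) (hN : 0 < N) (l : ℕ) (t : ℤ) :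
    ee N (l * (((t : ZMod N)).val : ℤ)) = ee N (l * t) := by
  haveI : NeZero N := ⟨hN.ne'⟩
  have hval : (((t : ZMod N)).val : ℤ) = t % N := ZMod.val_intCast t
  have : (l:ℤ) * t = l * (((t : ZMod N)).val : ℤ) + N * (l * (t / N)) := by
    rw [hval, Int.emod_def]; ring
  rw [this, ee_add, ee_int_mul N hN, mul_one]

lemma ee_val_nat (N : ℕ) (hN : 0 < N) (l : ℕ) (n : ℕ) :
    ee N (l * ((((n:ℕ) : ZMod N)).val : ℤ)) = ee N (l * n) := by
  have h : (((n:ℕ) : ZMod N)) = (((n:ℤ) : ZMod N)) := by push_cast; rfl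
  rw [h, ee_val N hN]

lemma dft_eq {N : ℕ} (z : ZMod N → ℂ) (k : ZMod N) :
    dft z k = ∑ n ∈ range N, z n * ee N (-((k.val:ℤ) * n)) := by
  unfold dft ee
  refine Finset.sum_congr rfl fun n _ => ?_
  congr 1
  push_cast
  ring

lemma analyticSignal_eq {N : ℕ} (x : ZMod N → ℝ) (n : ZMod N) :
    analyticSignal x n = (1/N : ℂ) * ∑ k ∈ range N, analyticHat N x k * ee N (k * (n.val:ℤ)) := by
  unfold analyticSignal ee
  congr 1
  refine Finset.sum_congr rfl fun k _ => ?_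
  congr 1
  push_cast
  ring

lemma stft_eq {N : ℕ} (w : ZMod N → ℂ) (L : ℤ) (z : ZMod N → ℂ) (k m : ℤ) :
    stft w L z k m = ∑ n ∈ range N, z n * w ((m * L - n : ℤ) : ZMod N) * ee N (-(k * n)) := by
  unfold stft ee
  refine Finset.sum_congr rfl fun n _ => ?_
  congr 1
  push_cast
  ring

lemma dft_analyticSignal {N : ℕ} (hN : 0 < N) (x : ZMod N → ℝ) (k : ZMod N) :
    dft (analyticSignal x) k = analyticHat N x k.val := by
  haveI : NeZero N := ⟨hN.ne'⟩
  have hNC : (N:ℂ) ≠ 0 := by exact_mod_cast hN.ne'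
  rw [dft_eq]
  have step1 : ∀ n ∈ range N, analyticSignal x (n : ZMod N) * ee N (-((k.val:ℤ) * n))
      = (1/N : ℂ) * ∑ j ∈ range N, analyticHat N x j * ee N (((j:ℤ) - k.val) * n) := by
    intro n _
    rw [analyticSignal_eq, mul_assoc, Finset.sum_mul]
    congr 1
    refine Finset.sum_congr rfl fun j _ => ?_
    rw [mul_assoc]
    congr 1
    rw [ee_val_nat N hN j n, ← ee_add]
    congr 1
    ring
  rw [Finset.sum_congr rfl step1, ← Finset.mul_sum, Finset.sum_comm]
  have step2 : ∀ j ∈ range N, ∑ n ∈ range N, analyticHat N x j * ee N (((j:ℤ) - k.val) * n)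
      = analyticHat N x j * (if (N:ℤ) ∣ ((j:ℤ) - k.val) then (N:ℂ) else 0) := by
    intro j _
    rw [← Finset.mul_sum, sum_ee N hN]
  rw [Finset.sum_congr rfl step2]
  rw [Finset.sum_eq_single k.val]
  · have hd : (N:ℤ) ∣ ((k.val:ℤ) - k.val) := by simp
    rw [if_pos hd]
    field_simp
  · intro j hj hne
    have hjN : j < N := Finset.mem_range.1 hj
    have hkN : k.val < N := ZMod.val_lt k
    have hnd : ¬ (N:ℤ) ∣ ((j:ℤ) - k.val) := by
      intro ⟨q, hq⟩
      have hq0 : ((j:ℤ) - k.val) = 0 := by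
        have hj' : (j:ℤ) < N := by exact_mod_cast hjN
        have hk' : (k.val:ℤ) < N := by exact_mod_cast hkN
        have hj0 : (0:ℤ) ≤ j := Int.ofNat_nonneg j
        have hk0 : (0:ℤ) ≤ k.val := Int.ofNat_nonneg k.val
        rcases lt_trichotomy q 0 with h|h|h
        · have : q ≤ -1 := by omega
          nlinarith
        · rw [h, mul_zero] at hq; omega
        · have : 1 ≤ q := by omega
          nlinarith
      have : j = k.val := by omega
      exact hne this
    rw [if_neg hnd, mul_zero]
  · intro h
    exact absurd (Finset.mem_range.2 (ZMod.val_lt k)) h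


lemma not_dvd_sub {N : ℕ} {a b : ℕ} (ha : a < N) (hb : b < N) (hne : a ≠ b) :
    ¬ (N:ℤ) ∣ ((a:ℤ) - b) := by
  intro ⟨q, hq⟩
  have ha' : (a:ℤ) < N := by exact_mod_cast ha
  have hb' : (b:ℤ) < N := by exact_mod_cast hb
  have ha0 : (0:ℤ) ≤ a := Int.ofNat_nonneg a
  have hb0 : (0:ℤ) ≤ b := Int.ofNat_nonneg b
  have hq0 : ((a:ℤ) - b) = 0 := by
    rcases lt_trichotomy q 0 with h|h|h
    · have : q ≤ -1 := by omega
      nlinarith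
    · rw [h, mul_zero] at hq; omega
    · have : 1 ≤ q := by omega
      nlinarith
  have : a = b := by omega
  exact hne this

lemma sum_pick {N : ℕ} (hN : 0 < N) (f : ℕ → ℂ) (c : ℤ) :
    ∑ j ∈ range N, f j * (if (N:ℤ) ∣ ((j:ℤ) - c) then (N:ℂ) else 0)
      = (N:ℂ) * f ((c % N).toNat) := by
  have hNZ : (N:ℤ) ≠ 0 := by exact_mod_cast hN.ne'
  have h0 : 0 ≤ c % N := Int.emod_nonneg c hNZ
  have h1 : c % N < N := Int.emod_lt_of_pos c (by exact_mod_cast hN)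
  set j0 : ℕ := (c % N).toNat with hj0
  have hj0N : j0 < N := by
    rw [hj0]
    exact (Int.toNat_lt h0).2 h1
  have hj0c : ((j0:ℤ) - c) = -((N:ℤ) * (c / N)) := by
    rw [hj0, Int.toNat_of_nonneg h0, Int.emod_def]; ring
  rw [Finset.sum_eq_single j0]
  · rw [if_pos ⟨-(c / N), by rw [hj0c]; ring⟩]; ring
  · intro j hj hne
    have hjN : j < N := Finset.mem_range.1 hj
    have hnd : ¬ (N:ℤ) ∣ ((j:ℤ) - c) := by
      intro hd
      have hd0 : (N:ℤ) ∣ ((j0:ℤ) - c) := ⟨-(c / N), by rw [hj0c]; ring⟩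
      have : (N:ℤ) ∣ ((j:ℤ) - j0) := by
        have := dvd_sub hd hd0
        simpa using this
      exact not_dvd_sub hjN hj0N hne this
    rw [if_neg hnd, mul_zero]
  · intro h
    exact absurd (Finset.mem_range.2 hj0N) h

lemma ee_combine (N : ℕ) (j l : ℕ) (k t n : ℤ) :
    ee N (j * n) * ee N (l * (t - n)) * ee N (-(k * n))
      = ee N (l * t) * ee N (((j:ℤ) - l - k) * n) := by
  rw [← ee_add, ← ee_add, ← ee_add]
  congr 1
  ring

lemma triple_sum {N : ℕ} (hN : 0 < N) (F G : ℕ → ℂ) (k t : ℤ) :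
    ∑ n ∈ range N, (((1/N:ℂ) * ∑ j ∈ range N, F j * ee N (j * n)) *
        ((1/N:ℂ) * ∑ l ∈ range N, G l * ee N (l * (t - (n:ℤ)))) * ee N (-(k * n)))
    = (1/N:ℂ) * ∑ l ∈ range N, G l * ee N (l * t) * F ((((l:ℤ) + k) % N).toNat) := by
  have hNC : (N:ℂ) ≠ 0 := by exact_mod_cast hN.ne'
  have step1 : ∀ n ∈ range N,
      (((1/N:ℂ) * ∑ j ∈ range N, F j * ee N (j * n)) *
        ((1/N:ℂ) * ∑ l ∈ range N, G l * ee N (l * (t - (n:ℤ)))) * ee N (-(k * n)))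
      = ∑ j ∈ range N, ∑ l ∈ range N,
          ((1/N:ℂ) * (1/N:ℂ) * F j * G l * ee N (l * t)) * ee N (((j:ℤ) - l - k) * n) := by
    intro n _
    have hre : (((1/N:ℂ) * ∑ j ∈ range N, F j * ee N (j * n)) *
        ((1/N:ℂ) * ∑ l ∈ range N, G l * ee N (l * (t - (n:ℤ)))) * ee N (-(k * n)))
        = ((∑ j ∈ range N, F j * ee N (j * n)) *
            (∑ l ∈ range N, G l * ee N (l * (t - (n:ℤ))))) * ((1/N:ℂ) * (1/N:ℂ) * ee N (-(k * n))) := by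
      ring
    rw [hre, Finset.sum_mul_sum, Finset.sum_mul]
    refine Finset.sum_congr rfl fun j _ => ?_
    rw [Finset.sum_mul]
    refine Finset.sum_congr rfl fun l _ => ?_
    linear_combination ((1/N:ℂ) * (1/N:ℂ) * F j * G l) * ee_combine N j l k t n
  rw [Finset.sum_congr rfl step1, Finset.sum_comm]
  have step2 : ∀ j ∈ range N,
      ∑ n ∈ range N, ∑ l ∈ range N,
          ((1/N:ℂ) * (1/N:ℂ) * F j * G l * ee N (l * t)) * ee N (((j:ℤ) - l - k) * n)
      = ∑ l ∈ range N,
          ((1/N:ℂ) * (1/N:ℂ) * F j * G l * ee N (l * t)) *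
            (if (N:ℤ) ∣ ((j:ℤ) - ((l:ℤ) + k)) then (N:ℂ) else 0) := by
    intro j _
    rw [Finset.sum_comm]
    refine Finset.sum_congr rfl fun l _ => ?_
    rw [← Finset.mul_sum]
    have : ∀ n ∈ range N, ee N (((j:ℤ) - l - k) * n) = ee N (((j:ℤ) - l - k) * n) := fun _ _ => rfl
    have harg : (j:ℤ) - l - k = (j:ℤ) - ((l:ℤ) + k) := by ring
    rw [harg, sum_ee N hN ((j:ℤ) - ((l:ℤ) + k))]
  rw [Finset.sum_congr rfl step2, Finset.sum_comm]
  rw [Finset.mul_sum]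
  refine Finset.sum_congr rfl fun l _ => ?_
  rw [sum_pick hN (fun j => (1/N:ℂ) * (1/N:ℂ) * F j * G l * ee N (l * t)) ((l:ℤ) + k)]
  field_simp

noncomputable def hatCoef (N M : ℕ) (j : ℕ) (n : ℕ) : ℂ :=
  (if j = 0 ∨ j = M then 1 else 2) * ee N (-((j:ℤ) * n))

lemma hat_eq_coef {N M : ℕ} (hNM : N = 2 * M) (hM : 0 < M) (x : ZMod N → ℝ)
    {j : ℕ} (hj : j ≤ M) :
    analyticHat N x j = ∑ n ∈ range N, hatCoef N M j n * (x n : ℂ) := by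
  haveI : NeZero N := ⟨by omega⟩
  have hEven : N % 2 = 0 := by omega
  have hN2 : N / 2 = M := by omega
  unfold analyticHat
  rw [if_pos hEven]
  by_cases hj0 : j = 0
  · subst hj0
    rw [if_pos rfl, dft_eq]
    refine Finset.sum_congr rfl fun n _ => ?_
    have : ((0 : ZMod N)).val = 0 := ZMod.val_zero
    rw [this, hatCoef, if_pos (Or.inl rfl)]
    push_cast
    ring
  · by_cases hjM : j = M
    · have h2 : ¬ (j ≤ N / 2 - 1) := by omega
      have h3 : j = N / 2 := by omega
      rw [if_neg hj0, if_neg h2, if_pos h3, hN2, dft_eq]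
      refine Finset.sum_congr rfl fun n _ => ?_
      have hvn : ((M : ZMod N)).val = M := ZMod.val_natCast_of_lt (by omega)
      rw [hvn, hatCoef, if_pos (Or.inr hjM), hjM]
      ring
    · rw [if_neg hj0, if_pos (by omega), dft_eq, Finset.mul_sum]
      refine Finset.sum_congr rfl fun n _ => ?_
      have hvn : ((j : ZMod N)).val = j := ZMod.val_natCast_of_lt (by omega)
      rw [hvn, hatCoef, if_neg (by tauto)]
      ring

lemma hat_gt {N M : ℕ} (hNM : N = 2 * M) (hM : 0 < M) (x : ZMod N → ℝ)
    {j : ℕ} (hj : M < j) : analyticHat N x j = 0 := by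
  have hEven : N % 2 = 0 := by omega
  unfold analyticHat
  rw [if_pos hEven, if_neg (by omega), if_neg (by omega), if_neg (by omega)]

lemma ee_M_real {N M : ℕ} (hNM : N = 2 * M) (hM : 0 < M) (n : ℕ) :
    ee N ((M:ℤ) * n) = ee N (-((M:ℤ) * n)) := by
  have hN : 0 < N := by omega
  have h : (M:ℤ) * n = -((M:ℤ) * n) + (N:ℤ) * n := by
    rw [hNM]; push_cast; ring
  conv_lhs => rw [h]
  rw [ee_add, ee_int_mul N hN, mul_one]

lemma conj_hat0 {N M : ℕ} (hNM : N = 2 * M) (hM : 0 < M) (x : ZMod N → ℝ) :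
    (starRingEnd ℂ) (analyticHat N x 0) = analyticHat N x 0 := by
  rw [hat_eq_coef hNM hM x (Nat.zero_le M), map_sum]
  refine Finset.sum_congr rfl fun n _ => ?_
  rw [map_mul, Complex.conj_ofReal]
  congr 1
  rw [hatCoef, if_pos (Or.inl rfl), map_mul, conj_ee]
  norm_num

lemma conj_hatM {N M : ℕ} (hNM : N = 2 * M) (hM : 0 < M) (x : ZMod N → ℝ) :
    (starRingEnd ℂ) (analyticHat N x M) = analyticHat N x M := by
  rw [hat_eq_coef hNM hM x (le_refl M), map_sum]
  refine Finset.sum_congr rfl fun n _ => ?_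
  rw [map_mul, Complex.conj_ofReal]
  congr 1
  rw [hatCoef, if_pos (Or.inr rfl), map_mul, conj_ee]
  rw [neg_neg, ee_M_real hNM hM n]
  norm_num

lemma stft_A {N : ℕ} (hN : 0 < N) (L : ℤ) (xw x : ZMod N → ℝ) (k m : ℤ) :
    stft (analyticSignal xw) L (analyticSignal x) k m
      = (1/N:ℂ) * ∑ l ∈ range N, analyticHat N xw l * ee N (l * (m * L)) *
          analyticHat N x ((((l:ℤ) + k) % N).toNat) := by
  rw [stft_eq]
  have step : ∀ n ∈ range N,
      analyticSignal x (n : ZMod N) * analyticSignal xw ((m * L - n : ℤ) : ZMod N) * ee N (-(k * n))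
      = (((1/N:ℂ) * ∑ j ∈ range N, analyticHat N x j * ee N (j * n)) *
          ((1/N:ℂ) * ∑ l ∈ range N, analyticHat N xw l * ee N (l * (m * L - (n:ℤ)))) *
            ee N (-(k * n))) := by
    intro n _
    congr 2
    · rw [analyticSignal_eq]
      congr 1
      refine Finset.sum_congr rfl fun j _ => ?_
      congr 1
      exact ee_val_nat N hN j n
    · rw [analyticSignal_eq]
      congr 1
      refine Finset.sum_congr rfl fun l _ => ?_
      congr 1
      exact ee_val N hN l (m * L - n)
  rw [Finset.sum_congr rfl step, triple_sum hN]

lemma stft_A_mid {N M : ℕ} (hNM : N = 2 * M) (hM : 2 ≤ M) (L : ℤ) (xw x : ZMod N → ℝ)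
    {k : ℕ} (hk : 1 ≤ k) (hk' : k ≤ M - 1) (m : ℤ) :
    stft (analyticSignal xw) L (analyticSignal x) (k : ℤ) m
      = (1/N:ℂ) * ∑ l ∈ range (M - k + 1),
          analyticHat N xw l * (ee N (m * L))^l * analyticHat N x (k + l) := by
  have hN : 0 < N := by omega
  rw [stft_A hN]
  congr 1
  rw [← Finset.sum_subset (Finset.range_subset_range.2 (by omega : M - k + 1 ≤ N))]
  · refine Finset.sum_congr rfl fun l hl => ?_
    have hl' : l ≤ M - k := by
      have := Finset.mem_range.1 hl; omega
    have hlk : l + k < N := by omega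
    have hmod : (((l:ℤ) + k) % N) = ((l + k : ℕ) : ℤ) := by
      rw [Int.emod_eq_of_lt (by positivity) (by exact_mod_cast hlk)]
      push_cast; ring
    rw [hmod, Int.toNat_natCast, ee_pow]
    congr 2
    omega
  · intro l hlN hl
    have hlN' : l < N := Finset.mem_range.1 hlN
    have hl' : M - k + 1 ≤ l := by
      by_contra hc
      exact hl (Finset.mem_range.2 (by omega))
    by_cases hlM : M < l
    · rw [hat_gt hNM (by omega) xw hlM]
      ring
    · have hlk : l + k < N := by omega
      have hlkM : M < l + k := by omega
      have hmod : (((l:ℤ) + k) % N) = ((l + k : ℕ) : ℤ) := by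
        rw [Int.emod_eq_of_lt (by positivity) (by exact_mod_cast hlk)]
        push_cast; ring
      rw [hmod, Int.toNat_natCast, hat_gt hNM (by omega) x hlkM]
      ring

lemma stft_A_top {N M : ℕ} (hNM : N = 2 * M) (hM : 2 ≤ M) (L : ℤ) (xw x : ZMod N → ℝ) :
    stft (analyticSignal xw) L (analyticSignal x) (M : ℤ) 0
      = (1/N:ℂ) * (analyticHat N xw 0 * analyticHat N x M
          + analyticHat N xw M * analyticHat N x 0) := by
  have hN : 0 < N := by omega
  rw [stft_A hN]
  congr 1
  rw [← Finset.sum_subset (show ({0, M} : Finset ℕ) ⊆ range N by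
      intro l hl
      simp only [Finset.mem_insert, Finset.mem_singleton] at hl
      rcases hl with rfl|rfl <;> exact Finset.mem_range.2 (by omega))]
  · rw [Finset.sum_pair (by omega : (0:ℕ) ≠ M)]
    have h0 : (((0:ℕ):ℤ) + (M:ℤ)) % N = ((M:ℕ):ℤ) := by
      rw [Int.emod_eq_of_lt (by positivity) (by exact_mod_cast (by omega : 0 + M < N))]
      push_cast; ring
    have hMM : (((M:ℕ):ℤ) + (M:ℤ)) % N = 0 := by
      have : ((M:ℕ):ℤ) + (M:ℤ) = (N:ℤ) := by rw [hNM]; push_cast; ring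
      rw [this, Int.emod_self]
    rw [h0, hMM, Int.toNat_natCast, Int.toNat_zero,
      show ((0:ℕ):ℤ) * ((0:ℤ) * L) = 0 by ring,
      show ((M:ℕ):ℤ) * ((0:ℤ) * L) = 0 by ring, ee_zero]
    ring
  · intro l hlN hl
    have hlN' : l < N := Finset.mem_range.1 hlN
    simp only [Finset.mem_insert, Finset.mem_singleton, not_or] at hl
    obtain ⟨hl0, hlM⟩ := hl
    by_cases hlgt : M < l
    · rw [hat_gt hNM (by omega) xw hlgt]; ring
    · have hlM' : l < M := by omega
      have hmod : (((l:ℤ) + (M:ℤ)) % N) = ((l + M : ℕ) : ℤ) := by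
        rw [Int.emod_eq_of_lt (by positivity) (by exact_mod_cast (by omega : l + M < N))]
        push_cast; ring
      rw [hmod, Int.toNat_natCast, hat_gt hNM (by omega) x (by omega : M < l + M)]
      ring

noncomputable def hatP (N M : ℕ) (j : ℕ) : MvPolynomial (ZMod N) ℂ :=
  ∑ n ∈ range N, MvPolynomial.C (hatCoef N M j n) * MvPolynomial.X ((n:ℕ) : ZMod N)

noncomputable def hatP' (N M : ℕ) (j : ℕ) : MvPolynomial (ZMod N) ℂ :=
  ∑ n ∈ range N, MvPolynomial.C ((starRingEnd ℂ) (hatCoef N M j n)) *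
    MvPolynomial.X ((n:ℕ) : ZMod N)

lemma eval_hatP {N M : ℕ} (hNM : N = 2 * M) (hM : 0 < M) (x : ZMod N → ℝ)
    {j : ℕ} (hj : j ≤ M) :
    MvPolynomial.eval (fun n => (x n : ℂ)) (hatP N M j) = analyticHat N x j := by
  rw [hat_eq_coef hNM hM x hj, hatP, map_sum]
  refine Finset.sum_congr rfl fun n _ => ?_
  simp

lemma eval_hatP' {N M : ℕ} (hNM : N = 2 * M) (hM : 0 < M) (x : ZMod N → ℝ)
    {j : ℕ} (hj : j ≤ M) :
    MvPolynomial.eval (fun n => (x n : ℂ)) (hatP' N M j)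
      = (starRingEnd ℂ) (analyticHat N x j) := by
  rw [hat_eq_coef hNM hM x hj, map_sum, hatP', map_sum]
  refine Finset.sum_congr rfl fun n _ => ?_
  rw [MvPolynomial.eval_mul, MvPolynomial.eval_C, MvPolynomial.eval_X, map_mul,
    Complex.conj_ofReal]

noncomputable def witF (N : ℕ) (c : ℕ → ℂ) : ZMod N → ℂ :=
  fun i => ∑ j' ∈ range N, c j' * ee N ((j' : ℤ) * i.val)

lemma eval_hatP_wit {N M : ℕ} (hN : 0 < N) (c : ℕ → ℂ) {j : ℕ} (hj : j < N) :
    MvPolynomial.eval (witF N c) (hatP N M j)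
      = (if j = 0 ∨ j = M then (1:ℂ) else 2) * ((N:ℂ) * c j) := by
  rw [hatP, map_sum]
  have step : ∀ n ∈ range N,
      MvPolynomial.eval (witF N c) (MvPolynomial.C (hatCoef N M j n) * MvPolynomial.X ((n:ℕ) : ZMod N))
      = (if j = 0 ∨ j = M then (1:ℂ) else 2) * ∑ j' ∈ range N, c j' * ee N (((j':ℤ) - j) * n) := by
    intro n _
    rw [MvPolynomial.eval_mul, MvPolynomial.eval_C, MvPolynomial.eval_X]
    show hatCoef N M j n * witF N c ((n:ℕ) : ZMod N) = _
    rw [witF, hatCoef]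
    simp only [Finset.mul_sum]
    refine Finset.sum_congr rfl fun j' _ => ?_
    rw [ee_val_nat N hN j' n]
    have hee : ee N (-((j:ℤ)*n)) * ee N ((j':ℤ)*n) = ee N (((j':ℤ) - j) * n) := by
      rw [← ee_add]; congr 1; ring
    linear_combination ((if j = 0 ∨ j = M then (1:ℂ) else 2) * c j') * hee
  rw [Finset.sum_congr rfl step, ← Finset.mul_sum]
  have hcomm : ∑ n ∈ range N, ∑ j' ∈ range N, c j' * ee N (((j':ℤ) - j) * n)
      = ∑ j' ∈ range N, ∑ n ∈ range N, c j' * ee N (((j':ℤ) - j) * n) := Finset.sum_comm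
  rw [hcomm]
  congr 1
  have step2 : ∀ j' ∈ range N, (∑ n ∈ range N, c j' * ee N (((j':ℤ) - j) * n))
      = c j' * (if (N:ℤ) ∣ ((j':ℤ) - j) then (N:ℂ) else 0) := by
    intro j' _
    rw [← Finset.mul_sum, sum_ee N hN]
  rw [Finset.sum_congr rfl step2, sum_pick hN c (j:ℤ)]
  congr 2
  rw [Int.emod_eq_of_lt (by positivity) (by exact_mod_cast hj), Int.toNat_natCast]

lemma eval_hatP'_wit {N M : ℕ} (hN : 0 < N) (c : ℕ → ℂ) {j : ℕ} (hj1 : 1 ≤ j) (hj : j < N) :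
    MvPolynomial.eval (witF N c) (hatP' N M j)
      = (if j = 0 ∨ j = M then (1:ℂ) else 2) * ((N:ℂ) * c (N - j)) := by
  rw [hatP', map_sum]
  have hconjco : ∀ n : ℕ, (starRingEnd ℂ) (hatCoef N M j n)
      = (if j = 0 ∨ j = M then (1:ℂ) else 2) * ee N ((j:ℤ) * n) := by
    intro n
    rw [hatCoef, map_mul, conj_ee, neg_neg]
    congr 1
    split
    · exact map_one _
    · exact map_ofNat _ 2
  have step : ∀ n ∈ range N,
      MvPolynomial.eval (witF N c) (MvPolynomial.C ((starRingEnd ℂ) (hatCoef N M j n)) * MvPolynomial.X ((n:ℕ) : ZMod N))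
      = (if j = 0 ∨ j = M then (1:ℂ) else 2) * ∑ j' ∈ range N, c j' * ee N (((j':ℤ) - ((N:ℤ) - j)) * n) := by
    intro n _
    rw [MvPolynomial.eval_mul, MvPolynomial.eval_C, MvPolynomial.eval_X]
    show (starRingEnd ℂ) (hatCoef N M j n) * witF N c ((n:ℕ) : ZMod N) = _
    rw [witF, hconjco]
    simp only [Finset.mul_sum]
    refine Finset.sum_congr rfl fun j' _ => ?_
    rw [ee_val_nat N hN j' n]
    have hee : ee N ((j:ℤ)*n) * ee N ((j':ℤ)*n) = ee N (((j':ℤ) - ((N:ℤ) - j)) * n) := by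
      rw [← ee_add, show (j:ℤ)*n + (j':ℤ)*n = ((j':ℤ)-((N:ℤ)-j))*n + (N:ℤ)*n by ring,
        ee_add, ee_int_mul N hN, mul_one]
    linear_combination ((if j = 0 ∨ j = M then (1:ℂ) else 2) * c j') * hee
  rw [Finset.sum_congr rfl step, ← Finset.mul_sum]
  have hcomm : ∑ n ∈ range N, ∑ j' ∈ range N, c j' * ee N (((j':ℤ) - ((N:ℤ) - j)) * n)
      = ∑ j' ∈ range N, ∑ n ∈ range N, c j' * ee N (((j':ℤ) - ((N:ℤ) - j)) * n) := Finset.sum_comm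
  rw [hcomm]
  congr 1
  have step2 : ∀ j' ∈ range N, (∑ n ∈ range N, c j' * ee N (((j':ℤ) - ((N:ℤ) - j)) * n))
      = c j' * (if (N:ℤ) ∣ ((j':ℤ) - ((N:ℤ) - j)) then (N:ℂ) else 0) := by
    intro j' _
    rw [← Finset.mul_sum, sum_ee N hN]
  rw [Finset.sum_congr rfl step2, sum_pick hN c ((N:ℤ) - j)]
  congr 2
  have hcast : (N:ℤ) - j = ((N - j : ℕ) : ℤ) := by omega
  rw [hcast, Int.emod_eq_of_lt (by positivity) (by exact_mod_cast (by omega : N - j < N)), Int.toNat_natCast]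

lemma ne_zero_of_eval {σ : Type*} (P : MvPolynomial σ ℂ) (v : σ → ℂ)
    (h : MvPolynomial.eval v P ≠ 0) : P ≠ 0 := fun h0 => h (by rw [h0]; simp)

lemma quad3 {q1 q2 q3 A B C A' B' C' : ℂ} (h12 : q1 ≠ q2) (h13 : q1 ≠ q3) (h23 : q2 ≠ q3)
    (e1 : A + B*q1 + C*q1^2 = A' + B'*q1 + C'*q1^2)
    (e2 : A + B*q2 + C*q2^2 = A' + B'*q2 + C'*q2^2)
    (e3 : A + B*q3 + C*q3^2 = A' + B'*q3 + C'*q3^2) :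
    A = A' ∧ B = B' ∧ C = C' := by
  have k1 : (q1 - q2) * ((B - B') + (C - C')*(q1+q2)) = 0 := by linear_combination e1 - e2
  have k2 : (q1 - q3) * ((B - B') + (C - C')*(q1+q3)) = 0 := by linear_combination e1 - e3
  have k1' : (B - B') + (C - C')*(q1+q2) = 0 :=
    (mul_eq_zero.1 k1).resolve_left (sub_ne_zero.2 h12)
  have k2' : (B - B') + (C - C')*(q1+q3) = 0 :=
    (mul_eq_zero.1 k2).resolve_left (sub_ne_zero.2 h13)
  have k3 : (C - C') * (q2 - q3) = 0 := by linear_combination k1' - k2'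
  have hC : C = C' := by
    have := (mul_eq_zero.1 k3).resolve_right (sub_ne_zero.2 h23)
    linear_combination this
  have hB : B = B' := by
    rw [hC] at k1'
    linear_combination k1'
  have hAq : A = A' := by
    rw [hB, hC] at e1
    linear_combination e1
  exact ⟨hAq, hB, hC⟩

lemma abs_eq_mul_conj {z z' : ℂ} (h : ‖z‖ = ‖z'‖) :
    z * (starRingEnd ℂ) z = z' * (starRingEnd ℂ) z' := by
  rw [Complex.mul_conj, Complex.mul_conj]
  norm_cast
  rw [← Complex.sq_norm, ← Complex.sq_norm, h]

lemma abs_real_cases {z z' : ℂ} (hz : (starRingEnd ℂ) z = z) (hz' : (starRingEnd ℂ) z' = z')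
    (h : ‖z‖ = ‖z'‖) : z = z' ∨ z = -z' := by
  have h2 : z * z = z' * z' := by
    calc z * z = z * (starRingEnd ℂ) z := by rw [hz]
      _ = z' * (starRingEnd ℂ) z' := abs_eq_mul_conj h
      _ = z' * z' := by rw [hz']
  have h3 : (z - z') * (z + z') = 0 := by linear_combination h2
  rcases mul_eq_zero.1 h3 with h4|h4
  · left; linear_combination h4
  · right; linear_combination h4

lemma chord {μ1 μ2 μ3 : ℂ} (h1 : μ1 * (starRingEnd ℂ) μ1 = 1) (h2 : μ2 * (starRingEnd ℂ) μ2 = 1)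
    (h3 : μ3 * (starRingEnd ℂ) μ3 = 1) (d12 : μ1 ≠ μ2) (d13 : μ1 ≠ μ3) (d23 : μ2 ≠ μ3) :
    (μ1 - μ2) * (starRingEnd ℂ) (μ1 - μ3) - (starRingEnd ℂ) (μ1 - μ2) * (μ1 - μ3) ≠ 0 := by
  intro h
  rw [map_sub, map_sub] at h
  have key : (μ1 - μ2) * (μ3 - μ1) * (μ2 - μ3) = 0 := by
    linear_combination (μ1*μ2*μ3) * h - (μ2*μ3*(μ3-μ2)) * h1
      - (μ1*μ3*(μ1-μ3)) * h2 - (μ1*μ2*(μ2-μ1)) * h3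
  rcases mul_eq_zero.1 key with h4|h4
  · rcases mul_eq_zero.1 h4 with h5|h5
    · exact d12 (sub_eq_zero.1 h5)
    · exact d13 (sub_eq_zero.1 h5).symm
  · exact d23 (sub_eq_zero.1 h4)

lemma conj_ne_zero {z : ℂ} (h : z ≠ 0) : (starRingEnd ℂ) z ≠ 0 := by
  intro h0
  apply h
  have := congrArg (starRingEnd ℂ) h0
  rwa [Complex.conj_conj, map_zero] at this

lemma ee_unit (N : ℕ) (t : ℤ) : ee N t * (starRingEnd ℂ) (ee N t) = 1 := by
  rw [conj_ee, mul_comm]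
  exact ee_neg_mul N t

lemma not_dvd_mul {N : ℕ} {L C m m' : ℤ} (hL0 : 0 < L) (hCL : (C - 1) * L < N)
    (hm : 0 ≤ m) (hm' : m ≤ C - 1) (hm2 : 0 ≤ m') (hm2' : m' ≤ C - 1) (hne : m ≠ m') :
    ¬ (N:ℤ) ∣ ((m - m') * L) := by
  intro ⟨q, hq⟩
  have hd : m - m' ≠ 0 := by omega
  have h1 : (m - m') * L ≠ 0 := mul_ne_zero hd hL0.ne'
  have hub : (m - m') * L < N := by nlinarith
  have hlb : -(N:ℤ) < (m - m') * L := by nlinarith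
  have hN0 : (0:ℤ) < N := by nlinarith
  rcases lt_trichotomy q 0 with h|h|h
  · have : q ≤ -1 := by omega
    nlinarith
  · rw [h, mul_zero] at hq; exact h1 hq
  · have : 1 ≤ q := by omega
    nlinarith

lemma mu_ne {N : ℕ} (hN : 0 < N) {L : ℤ} {m m' : ℤ}
    (h : ¬ (N:ℤ) ∣ ((m - m') * L)) : ee N (m * L) ≠ ee N (m' * L) := by
  intro heq
  apply h
  rw [← ee_eq_one_iff N hN]
  have h1 : ee N ((m - m') * L) * ee N (m' * L) = ee N (m' * L) := by
    rw [← ee_add, show (m - m') * L + m' * L = m * L by ring, heq]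
  exact mul_right_cancel₀ (ee_ne_zero N (m' * L)) (by rw [h1, one_mul])


lemma sum_range_split (f : ℕ → ℂ) (n : ℕ) :
    ∑ l ∈ range (n+1), f l = f 0 + ∑ l ∈ Finset.Icc 1 n, f l := by
  induction n with
  | zero => simp
  | succ n ih =>
    rw [Finset.sum_range_succ, ih, Finset.sum_Icc_succ_top (by omega : 1 ≤ n + 1)]
    ring

lemma polyize {b0 b1 p q μ : ℂ} (hu : μ * (starRingEnd ℂ) μ = 1) :
    (b0*p + b1*μ*q) * (starRingEnd ℂ) (b0*p + b1*μ*q) * μ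
    = (b0 * (starRingEnd ℂ) b1 * p * (starRingEnd ℂ) q)
      + (b0 * (starRingEnd ℂ) b0 * p * (starRingEnd ℂ) p
          + b1 * (starRingEnd ℂ) b1 * q * (starRingEnd ℂ) q) * μ
      + ((starRingEnd ℂ) b0 * b1 * (starRingEnd ℂ) p * q) * μ^2 := by
  have hcm : (starRingEnd ℂ) (b0*p + b1*μ*q)
      = (starRingEnd ℂ) b0 * (starRingEnd ℂ) p
        + (starRingEnd ℂ) b1 * (starRingEnd ℂ) μ * (starRingEnd ℂ) q := by
    rw [map_add, map_mul, map_mul, map_mul]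
  rw [hcm]
  linear_combination (b0 * (starRingEnd ℂ) b1 * p * (starRingEnd ℂ) q
    + b1 * (starRingEnd ℂ) b1 * q * (starRingEnd ℂ) q * μ) * hu

lemma cancel_step {A1 A2 A3 v : ℂ}
    (e1 : (A1 + v) * (starRingEnd ℂ) (A1 + v) = A1 * (starRingEnd ℂ) A1)
    (e2 : (A2 + v) * (starRingEnd ℂ) (A2 + v) = A2 * (starRingEnd ℂ) A2)
    (e3 : (A3 + v) * (starRingEnd ℂ) (A3 + v) = A3 * (starRingEnd ℂ) A3)
    (hW : (A1 - A2) * (starRingEnd ℂ) (A1 - A3)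
        - (starRingEnd ℂ) (A1 - A2) * (A1 - A3) ≠ 0) : v = 0 := by
  simp only [map_add] at e1 e2 e3
  have k12 : v * ((starRingEnd ℂ) A1 - (starRingEnd ℂ) A2)
      + (starRingEnd ℂ) v * (A1 - A2) = 0 := by linear_combination e1 - e2
  have k13 : v * ((starRingEnd ℂ) A1 - (starRingEnd ℂ) A3)
      + (starRingEnd ℂ) v * (A1 - A3) = 0 := by linear_combination e1 - e3
  have hWr : (A1 - A2) * ((starRingEnd ℂ) A1 - (starRingEnd ℂ) A3)
      - ((starRingEnd ℂ) A1 - (starRingEnd ℂ) A2) * (A1 - A3) ≠ 0 := by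
    rw [map_sub, map_sub] at hW
    exact hW
  have key : v * ((A1 - A2) * ((starRingEnd ℂ) A1 - (starRingEnd ℂ) A3)
      - ((starRingEnd ℂ) A1 - (starRingEnd ℂ) A2) * (A1 - A3)) = 0 := by
    linear_combination (A1 - A2) * k13 - (A1 - A3) * k12
  exact (mul_eq_zero.1 key).resolve_right hWr

end STFTPRAux

open Complex Finset in
/-- Theorem `3` of the paper: for even `N` and two analytic windows,
a generic analytic signal is determined up to a global sign by `3N/2 − 1` STFT
magnitudes. -/
theorem stft_pr_analytic_windows (N : ℕ) (hN : 0 < N) (hEven : N % 2 = 0)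
    (L : ℤ) (hL0 : 0 < L) (hLN : L < (N : ℤ)) (hceil : 3 ≤ ⌈(N : ℚ) / (L : ℚ)⌉)
    (m1 m2 m3 : ℤ)
    (hm1 : 0 ≤ m1) (hm1' : m1 ≤ ⌈(N : ℚ) / (L : ℚ)⌉ - 1)
    (hm2 : 0 ≤ m2) (hm2' : m2 ≤ ⌈(N : ℚ) / (L : ℚ)⌉ - 1)
    (hm3 : 0 ≤ m3) (hm3' : m3 ≤ ⌈(N : ℚ) / (L : ℚ)⌉ - 1)
    (h12 : m1 ≠ m2) (h13 : m1 ≠ m3) (h23 : m2 ≠ m3)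
    (w1 w2 : ZMod N → ℂ) (hw1a : IsAnalytic w1) (hw2a : IsAnalytic w2)
    (hA : dft w1 1 * dft w1 0 ≠ 0)
    (hB : dft w1 ((N / 2 : ℕ) : ZMod N) * dft w2 ((N / 2 : ℕ) : ZMod N) ≠ 0)
    (hC : dft w1 0 * dft w2 ((N / 2 : ℕ) : ZMod N) -
      dft w2 0 * dft w1 ((N / 2 : ℕ) : ZMod N) ≠ 0) :
    ∃ P : MvPolynomial (ZMod N) ℂ, P ≠ 0 ∧
      ∀ x : ZMod N → ℝ, MvPolynomial.eval (fun n => (x n : ℂ)) P ≠ 0 →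
        ∀ zt : ZMod N → ℂ, IsAnalytic zt →
          ‖stft w1 L zt ((N / 2 : ℕ) : ℤ) 0‖ =
            ‖stft w1 L (analyticSignal x) ((N / 2 : ℕ) : ℤ) 0‖ →
          ‖stft w2 L zt ((N / 2 : ℕ) : ℤ) 0‖ =
            ‖stft w2 L (analyticSignal x) ((N / 2 : ℕ) : ℤ) 0‖ →
          (∀ k : ℕ, 1 ≤ k → k ≤ N / 2 - 1 → ∀ m ∈ ({m1, m2, m3} : Set ℤ),
            ‖stft w1 L zt (k : ℤ) m‖ =
              ‖stft w1 L (analyticSignal x) (k : ℤ) m‖) →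
          zt = analyticSignal x ∨ zt = -analyticSignal x := by
  classical
  obtain ⟨M, hNM⟩ : ∃ M, N = 2 * M := ⟨N / 2, by omega⟩
  have hceilN : ⌈(N : ℚ) / (L : ℚ)⌉ ≤ (N : ℤ) := by
    have hL1 : (1:ℚ) ≤ (L:ℚ) := by exact_mod_cast hL0
    have hdv : (N:ℚ) / (L:ℚ) ≤ (N:ℚ) := div_le_self (by positivity) hL1
    calc ⌈(N : ℚ) / (L : ℚ)⌉ ≤ ⌈(N:ℚ)⌉ := Int.ceil_le_ceil hdv
      _ = (N:ℤ) := by exact_mod_cast Int.ceil_natCast N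
  have hN3 : 3 ≤ N := by exact_mod_cast le_trans hceil hceilN
  have hM2 : 2 ≤ M := by omega
  have hM0 : 0 < M := by omega
  have hN2M : N / 2 = M := by omega
  haveI : NeZero N := ⟨by omega⟩
  haveI : Fact (1 < N) := ⟨by omega⟩
  have hNC : (N:ℂ) ≠ 0 := by exact_mod_cast hN.ne'
  obtain ⟨y1, rfl⟩ := hw1a
  obtain ⟨y2, rfl⟩ := hw2a
  set b : ℕ → ℂ := fun l => analyticHat N y1 l with hbdef
  set c : ℕ → ℂ := fun l => analyticHat N y2 l with hcdef
  have hval1 : ((1 : ZMod N)).val = 1 := ZMod.val_one N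
  have hdb1 : dft (analyticSignal y1) 1 = b 1 := by
    rw [dft_analyticSignal hN, hval1]
  have hdb0 : dft (analyticSignal y1) 0 = b 0 := by
    rw [dft_analyticSignal hN, ZMod.val_zero]
  have hdbM : dft (analyticSignal y1) ((N / 2 : ℕ) : ZMod N) = b M := by
    rw [dft_analyticSignal hN, hN2M, ZMod.val_natCast_of_lt (by omega)]
  have hdc0 : dft (analyticSignal y2) 0 = c 0 := by
    rw [dft_analyticSignal hN, ZMod.val_zero]
  have hdcM : dft (analyticSignal y2) ((N / 2 : ℕ) : ZMod N) = c M := by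
    rw [dft_analyticSignal hN, hN2M, ZMod.val_natCast_of_lt (by omega)]
  rw [hdb1, hdb0] at hA
  rw [hdbM, hdcM] at hB
  rw [hdb0, hdcM, hdc0, hdbM] at hC
  have hb1 : b 1 ≠ 0 := left_ne_zero_of_mul hA
  have hb0 : b 0 ≠ 0 := right_ne_zero_of_mul hA
  have hbM : b M ≠ 0 := left_ne_zero_of_mul hB
  have hcM : c M ≠ 0 := right_ne_zero_of_mul hB
  set Dc : ℂ := b 0 * c M - c 0 * b M with hDcdef
  have hDc : Dc ≠ 0 := hC
  -- separation points
  set μ1 : ℂ := ee N (m1 * L) with hμ1def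
  set μ2 : ℂ := ee N (m2 * L) with hμ2def
  set μ3 : ℂ := ee N (m3 * L) with hμ3def
  have hCL : (⌈(N : ℚ) / (L : ℚ)⌉ - 1) * L < (N:ℤ) := by
    have hLQ : (0:ℚ) < (L:ℚ) := by exact_mod_cast hL0
    have h1 : ((⌈(N : ℚ) / (L : ℚ)⌉ : ℚ) - 1) < (N:ℚ) / (L:ℚ) := by
      have := Int.ceil_lt_add_one ((N:ℚ) / (L:ℚ))
      linarith
    have h2 : ((⌈(N : ℚ) / (L : ℚ)⌉ : ℚ) - 1) * L < (N:ℚ) := by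
      rw [← lt_div_iff₀ hLQ]
      exact h1
    exact_mod_cast h2
  have hd12 : μ1 ≠ μ2 := mu_ne hN (not_dvd_mul hL0 hCL hm1 hm1' hm2 hm2' h12)
  have hd13 : μ1 ≠ μ3 := mu_ne hN (not_dvd_mul hL0 hCL hm1 hm1' hm3 hm3' h13)
  have hd23 : μ2 ≠ μ3 := mu_ne hN (not_dvd_mul hL0 hCL hm2 hm2' hm3 hm3' h23)
  have hu1 : μ1 * (starRingEnd ℂ) μ1 = 1 := ee_unit N _
  have hu2 : μ2 * (starRingEnd ℂ) μ2 = 1 := ee_unit N _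
  have hu3 : μ3 * (starRingEnd ℂ) μ3 = 1 := ee_unit N _
  -- the genericity polynomial
  set r1P : MvPolynomial (ZMod N) ℂ :=
    MvPolynomial.C (b 0) * hatP N M M + MvPolynomial.C (b M) * hatP N M 0 with hr1Pdef
  set r2P : MvPolynomial (ZMod N) ℂ :=
    MvPolynomial.C (c 0) * hatP N M M + MvPolynomial.C (c M) * hatP N M 0 with hr2Pdef
  set g1P : MvPolynomial (ZMod N) ℂ :=
    MvPolynomial.C (c M) * r1P + MvPolynomial.C (b M) * r2P with hg1Pdef
  set F1 : MvPolynomial (ZMod N) ℂ := hatP N M (M - 1) with hF1def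
  set F2 : MvPolynomial (ZMod N) ℂ := hatP N M M with hF2def
  set F3 : MvPolynomial (ZMod N) ℂ :=
    MvPolynomial.C (Dc^2) * (hatP N M M)^2 - g1P^2 with hF3def
  set F4 : MvPolynomial (ZMod N) ℂ :=
    MvPolynomial.C (b 1 * (starRingEnd ℂ) (b 1)) * g1P^2
      - MvPolynomial.C (b 0 * (starRingEnd ℂ) (b 0) * Dc^2) *
          (hatP N M (M - 1) * hatP' N M (M - 1)) with hF4def
  set PW : ℕ → MvPolynomial (ZMod N) ℂ := fun k =>
    (∑ l ∈ Finset.Icc 1 (M - k), MvPolynomial.C (b l * (μ1^l - μ2^l)) * hatP N M (k + l)) *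
      (∑ l ∈ Finset.Icc 1 (M - k),
        MvPolynomial.C ((starRingEnd ℂ) (b l * (μ1^l - μ3^l))) * hatP' N M (k + l))
    - (∑ l ∈ Finset.Icc 1 (M - k),
        MvPolynomial.C ((starRingEnd ℂ) (b l * (μ1^l - μ2^l))) * hatP' N M (k + l)) *
      (∑ l ∈ Finset.Icc 1 (M - k), MvPolynomial.C (b l * (μ1^l - μ3^l)) * hatP N M (k + l))
    with hPWdef
  refine ⟨F1 * F2 * F3 * F4 * ∏ k ∈ Finset.Icc 1 (M - 2), PW k, ?_, ?_⟩
  · -- the polynomial is nonzero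
    have hF1 : F1 ≠ 0 := by
      refine ne_zero_of_eval _ (witF N (fun j => if j = M - 1 then 1 else 0)) ?_
      rw [hF1def, eval_hatP_wit hN _ (by omega : M - 1 < N), if_neg (by omega), if_pos rfl]
      simp [hNC]
    have hF2 : F2 ≠ 0 := by
      refine ne_zero_of_eval _ (witF N (fun j => if j = M then 1 else 0)) ?_
      rw [hF2def, eval_hatP_wit hN _ (by omega : M < N), if_pos (Or.inr rfl), if_pos rfl]
      simp [hNC]
    have hF3 : F3 ≠ 0 := by
      set τ : ℂ := (2*Dc - (c M * b 0 + b M * c 0))/(2 * b M * c M) with hτ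
      set cf : ℕ → ℂ := fun j => if j = M then 1/(N:ℂ) else if j = 0 then τ/(N:ℂ) else 0 with hcf
      refine ne_zero_of_eval _ (witF N cf) ?_
      have hvM : cf M = 1/(N:ℂ) := by rw [hcf]; simp
      have hv0 : cf 0 = τ/(N:ℂ) := by simp only [hcf]; rw [if_neg (by omega : ¬(0 = M))]; simp
      rw [hF3def, hg1Pdef, hr1Pdef, hr2Pdef]
      simp only [map_sub, map_add, map_mul, map_pow, MvPolynomial.eval_C]
      rw [eval_hatP_wit hN _ (by omega : M < N), eval_hatP_wit hN _ (by omega : 0 < N),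
        if_pos (Or.inr rfl), if_pos (Or.inl rfl), hvM, hv0]
      have e1 : (1:ℂ) * ((N:ℂ) * (1/(N:ℂ))) = 1 := by field_simp
      have e2 : (1:ℂ) * ((N:ℂ) * (τ/(N:ℂ))) = τ := by field_simp
      rw [e1, e2]
      have key : c M * (b 0 * 1 + b M * τ) + b M * (c 0 * 1 + c M * τ) = 2*Dc := by
        rw [hτ, hDcdef]
        field_simp
        ring
      rw [key]
      intro h
      apply hDc
      have hsq : Dc^2 = 0 := by linear_combination (-(1:ℂ)/3) * h
      exact pow_eq_zero_iff (by norm_num : (2:ℕ) ≠ 0) |>.1 hsq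
    have hF4 : F4 ≠ 0 := by
      set cf : ℕ → ℂ := fun j => if j = M - 1 ∨ j = M + 1 then 1/(2*(N:ℂ)) else 0 with hcf
      refine ne_zero_of_eval _ (witF N cf) ?_
      have hvM1 : cf (M - 1) = 1/(2*(N:ℂ)) := by rw [hcf]; simp
      have hvM1' : cf (M + 1) = 1/(2*(N:ℂ)) := by rw [hcf]; simp
      have hvM : cf M = 0 := by simp only [hcf]; rw [if_neg (by omega)]
      have hv0 : cf 0 = 0 := by simp only [hcf]; rw [if_neg (by omega)]
      have hNmm : N - (M - 1) = M + 1 := by omega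
      rw [hF4def, hg1Pdef, hr1Pdef, hr2Pdef]
      simp only [map_sub, map_add, map_mul, map_pow, MvPolynomial.eval_C]
      rw [eval_hatP_wit hN _ (by omega : M < N), eval_hatP_wit hN _ (by omega : 0 < N),
        eval_hatP_wit hN _ (by omega : M - 1 < N),
        eval_hatP'_wit hN _ (by omega : 1 ≤ M - 1) (by omega : M - 1 < N),
        if_pos (Or.inr rfl), if_pos (Or.inl rfl), if_neg (by omega : ¬(M - 1 = 0 ∨ M - 1 = M)),
        hvM, hv0, hvM1, hNmm, hvM1']
      have e1 : (2:ℂ) * ((N:ℂ) * (1/(2*(N:ℂ)))) = 1 := by field_simp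
      rw [e1]
      have ez : c M * (b 0 * ((1:ℂ) * ((N:ℂ) * 0)) + b M * ((1:ℂ) * ((N:ℂ) * 0)))
          + b M * (c 0 * ((1:ℂ) * ((N:ℂ) * 0)) + c M * ((1:ℂ) * ((N:ℂ) * 0))) = 0 := by ring
      rw [ez]
      intro h
      have : b 0 * (starRingEnd ℂ) (b 0) * Dc^2 = 0 := by linear_combination -h
      rcases mul_eq_zero.1 this with h'|h'
      · rcases mul_eq_zero.1 h' with h''|h''
        · exact hb0 h''
        · exact conj_ne_zero hb0 h''
      · exact hDc (pow_eq_zero_iff (by norm_num : (2:ℕ) ≠ 0) |>.1 h')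
    have hPWne : ∀ k ∈ Finset.Icc 1 (M - 2), PW k ≠ 0 := by
      intro k hk
      obtain ⟨hk1, hk2⟩ := Finset.mem_Icc.1 hk
      set cf : ℕ → ℂ := fun j => if j = k + 1 ∨ j = N - (k + 1) then 1/(2*(N:ℂ)) else 0 with hcf
      refine ne_zero_of_eval _ (witF N cf) ?_
      have hev1 : ∀ (ν ν' : ℂ), MvPolynomial.eval (witF N cf)
          (∑ l ∈ Finset.Icc 1 (M - k), MvPolynomial.C (b l * (ν^l - ν'^l)) * hatP N M (k + l))
          = b 1 * (ν - ν') := by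
        intro ν ν'
        rw [map_sum]
        rw [Finset.sum_eq_single 1]
        · rw [map_mul, MvPolynomial.eval_C, eval_hatP_wit hN _ (by omega : k + 1 < N),
            if_neg (by omega : ¬(k + 1 = 0 ∨ k + 1 = M))]
          have : cf (k + 1) = 1/(2*(N:ℂ)) := by rw [hcf]; simp
          rw [this]
          have e1 : (2:ℂ) * ((N:ℂ) * (1/(2*(N:ℂ)))) = 1 := by field_simp
          rw [e1]
          ring
        · intro l hl hlne
          obtain ⟨hl1, hl2⟩ := Finset.mem_Icc.1 hl
          rw [map_mul, MvPolynomial.eval_C, eval_hatP_wit hN _ (by omega : k + l < N)]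
          have : cf (k + l) = 0 := by simp only [hcf]; rw [if_neg (by omega)]
          rw [this]
          ring
        · intro hnot
          exact absurd (Finset.mem_Icc.2 (by omega)) hnot
      have hev2 : ∀ (ν ν' : ℂ), MvPolynomial.eval (witF N cf)
          (∑ l ∈ Finset.Icc 1 (M - k),
            MvPolynomial.C ((starRingEnd ℂ) (b l * (ν^l - ν'^l))) * hatP' N M (k + l))
          = (starRingEnd ℂ) (b 1 * (ν - ν')) := by
        intro ν ν'
        rw [map_sum]
        rw [Finset.sum_eq_single 1]
        · rw [map_mul, MvPolynomial.eval_C,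
            eval_hatP'_wit hN _ (by omega : 1 ≤ k + 1) (by omega : k + 1 < N),
            if_neg (by omega : ¬(k + 1 = 0 ∨ k + 1 = M))]
          have : cf (N - (k + 1)) = 1/(2*(N:ℂ)) := by rw [hcf]; simp
          rw [this]
          have e1 : (2:ℂ) * ((N:ℂ) * (1/(2*(N:ℂ)))) = 1 := by field_simp
          rw [e1, pow_one, pow_one]
          ring
        · intro l hl hlne
          obtain ⟨hl1, hl2⟩ := Finset.mem_Icc.1 hl
          rw [map_mul, MvPolynomial.eval_C,
            eval_hatP'_wit hN _ (by omega : 1 ≤ k + l) (by omega : k + l < N)]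
          have : cf (N - (k + l)) = 0 := by simp only [hcf]; rw [if_neg (by omega)]
          rw [this]
          ring
        · intro hnot
          exact absurd (Finset.mem_Icc.2 (by omega)) hnot
      simp only [hPWdef]
      rw [map_sub, map_mul, map_mul]
      rw [hev1 μ1 μ2, hev1 μ1 μ3, hev2 μ1 μ2, hev2 μ1 μ3]
      have hchord := chord hu1 hu2 hu3 hd12 hd13 hd23
      have hrw : b 1 * (μ1 - μ2) * (starRingEnd ℂ) (b 1 * (μ1 - μ3))
          - (starRingEnd ℂ) (b 1 * (μ1 - μ2)) * (b 1 * (μ1 - μ3))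
          = (b 1 * (starRingEnd ℂ) (b 1)) *
              ((μ1 - μ2) * (starRingEnd ℂ) (μ1 - μ3)
                - (starRingEnd ℂ) (μ1 - μ2) * (μ1 - μ3)) := by
        rw [map_mul, map_mul]
        ring
      rw [hrw]
      exact mul_ne_zero (mul_ne_zero hb1 (conj_ne_zero hb1)) hchord
    exact mul_ne_zero (mul_ne_zero (mul_ne_zero (mul_ne_zero hF1 hF2) hF3) hF4)
      (Finset.prod_ne_zero_iff.2 hPWne)
  · -- main implication
    intro x hPx zt hzt hme1 hme2 hme3
    obtain ⟨xt, rfl⟩ := hzt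
    -- shorthand facts
    have hcb0 : (starRingEnd ℂ) (b 0) = b 0 := by
      simp only [hbdef]; exact conj_hat0 hNM hM0 y1
    have hcbM : (starRingEnd ℂ) (b M) = b M := by
      simp only [hbdef]; exact conj_hatM hNM hM0 y1
    have hcc0 : (starRingEnd ℂ) (c 0) = c 0 := by
      simp only [hcdef]; exact conj_hat0 hNM hM0 y2
    have hccM : (starRingEnd ℂ) (c M) = c M := by
      simp only [hcdef]; exact conj_hatM hNM hM0 y2
    have hcA0 : (starRingEnd ℂ) (analyticHat N x 0) = analyticHat N x 0 := conj_hat0 hNM hM0 x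
    have hcAM : (starRingEnd ℂ) (analyticHat N x M) = analyticHat N x M := conj_hatM hNM hM0 x
    have hcT0 : (starRingEnd ℂ) (analyticHat N xt 0) = analyticHat N xt 0 := conj_hat0 hNM hM0 xt
    have hcTM : (starRingEnd ℂ) (analyticHat N xt M) = analyticHat N xt M := conj_hatM hNM hM0 xt
    have habsN : ‖1/(N:ℂ)‖ ≠ 0 := norm_ne_zero_iff.2 (one_div_ne_zero hNC)
    -- genericity facts at x
    have hPx' : MvPolynomial.eval (fun n => (x n:ℂ)) F1 * MvPolynomial.eval (fun n => (x n:ℂ)) F2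
        * MvPolynomial.eval (fun n => (x n:ℂ)) F3 * MvPolynomial.eval (fun n => (x n:ℂ)) F4
        * MvPolynomial.eval (fun n => (x n:ℂ)) (∏ k ∈ Finset.Icc 1 (M - 2), PW k) ≠ 0 := by
      simpa only [map_mul] using hPx
    have hax1 : analyticHat N x (M - 1) ≠ 0 := by
      have h := left_ne_zero_of_mul (left_ne_zero_of_mul (left_ne_zero_of_mul
        (left_ne_zero_of_mul hPx')))
      rwa [hF1def, eval_hatP hNM hM0 x (by omega)] at h
    have haxM : analyticHat N x M ≠ 0 := by
      have h := right_ne_zero_of_mul (left_ne_zero_of_mul (left_ne_zero_of_mul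
        (left_ne_zero_of_mul hPx')))
      rwa [hF2def, eval_hatP hNM hM0 x (le_refl M)] at h
    set R1 : ℂ := b 0 * analyticHat N x M + b M * analyticHat N x 0 with hR1def
    set R2 : ℂ := c 0 * analyticHat N x M + c M * analyticHat N x 0 with hR2def
    set g1x : ℂ := c M * R1 + b M * R2 with hg1xdef
    have hevM : MvPolynomial.eval (fun n => (x n:ℂ)) (hatP N M M) = analyticHat N x M :=
      eval_hatP hNM hM0 x (le_refl M)
    have hev0 : MvPolynomial.eval (fun n => (x n:ℂ)) (hatP N M 0) = analyticHat N x 0 :=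
      eval_hatP hNM hM0 x (Nat.zero_le M)
    have hevM1 : MvPolynomial.eval (fun n => (x n:ℂ)) (hatP N M (M-1)) = analyticHat N x (M-1) :=
      eval_hatP hNM hM0 x (by omega)
    have hevM1' : MvPolynomial.eval (fun n => (x n:ℂ)) (hatP' N M (M-1))
        = (starRingEnd ℂ) (analyticHat N x (M-1)) := eval_hatP' hNM hM0 x (by omega)
    have hevg1 : MvPolynomial.eval (fun n => (x n:ℂ)) g1P = g1x := by
      simp only [hg1Pdef, hr1Pdef, hr2Pdef, hF2def, map_add, map_mul, MvPolynomial.eval_C,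
        hevM, hev0]
      rw [hg1xdef, hR1def, hR2def]
    have hax3 : Dc^2 * (analyticHat N x M)^2 - g1x^2 ≠ 0 := by
      have h := right_ne_zero_of_mul (left_ne_zero_of_mul (left_ne_zero_of_mul hPx'))
      intro h0
      apply h
      simp only [hF3def, map_sub, map_mul, map_pow, MvPolynomial.eval_C, hevM, hevg1]
      linear_combination h0
    have hax4 : b 1 * (starRingEnd ℂ) (b 1) * g1x^2
        - b 0 * (starRingEnd ℂ) (b 0) * Dc^2 *
          (analyticHat N x (M - 1) * (starRingEnd ℂ) (analyticHat N x (M - 1))) ≠ 0 := by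
      have h := right_ne_zero_of_mul (left_ne_zero_of_mul hPx')
      intro h0
      apply h
      simp only [hF4def, map_sub, map_mul, map_pow, MvPolynomial.eval_C, hevg1, hevM1, hevM1']
      linear_combination h0
    have haxW : ∀ k, 1 ≤ k → k ≤ M - 2 →
        (∑ l ∈ Finset.Icc 1 (M - k), b l * (μ1^l - μ2^l) * analyticHat N x (k + l)) *
          (starRingEnd ℂ) (∑ l ∈ Finset.Icc 1 (M - k), b l * (μ1^l - μ3^l) * analyticHat N x (k + l))
        - (starRingEnd ℂ) (∑ l ∈ Finset.Icc 1 (M - k), b l * (μ1^l - μ2^l) * analyticHat N x (k + l)) *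
            (∑ l ∈ Finset.Icc 1 (M - k), b l * (μ1^l - μ3^l) * analyticHat N x (k + l)) ≠ 0 := by
      intro k hk1 hk2
      have h := right_ne_zero_of_mul hPx'
      rw [MvPolynomial.eval_prod] at h
      have h2 := Finset.prod_ne_zero_iff.1 h k (Finset.mem_Icc.2 ⟨hk1, hk2⟩)
      simp only [hPWdef] at h2
      have hevS : ∀ (ν ν' : ℂ), MvPolynomial.eval (fun n => (x n:ℂ))
          (∑ l ∈ Finset.Icc 1 (M - k), MvPolynomial.C (b l * (ν^l - ν'^l)) * hatP N M (k + l))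
          = ∑ l ∈ Finset.Icc 1 (M - k), b l * (ν^l - ν'^l) * analyticHat N x (k + l) := by
        intro ν ν'
        rw [map_sum]
        refine Finset.sum_congr rfl fun l hl => ?_
        obtain ⟨hl1, hl2⟩ := Finset.mem_Icc.1 hl
        rw [map_mul, MvPolynomial.eval_C, eval_hatP hNM hM0 x (by omega)]
      have hevS' : ∀ (ν ν' : ℂ), MvPolynomial.eval (fun n => (x n:ℂ))
          (∑ l ∈ Finset.Icc 1 (M - k),
            MvPolynomial.C ((starRingEnd ℂ) (b l * (ν^l - ν'^l))) * hatP' N M (k + l))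
          = (starRingEnd ℂ) (∑ l ∈ Finset.Icc 1 (M - k), b l * (ν^l - ν'^l) * analyticHat N x (k + l)) := by
        intro ν ν'
        rw [map_sum, map_sum]
        refine Finset.sum_congr rfl fun l hl => ?_
        obtain ⟨hl1, hl2⟩ := Finset.mem_Icc.1 hl
        rw [map_mul, MvPolynomial.eval_C, eval_hatP' hNM hM0 x (by omega)]
        simp only [map_mul]
      rw [map_sub, map_mul, map_mul, hevS μ1 μ2, hevS μ1 μ3, hevS' μ1 μ2, hevS' μ1 μ3] at h2
      exact h2
    -- translate the two k = M measurements
    rw [hN2M] at hme1 hme2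
    rw [stft_A_top hNM hM2 L y1 xt, stft_A_top hNM hM2 L y1 x, norm_mul, norm_mul] at hme1
    rw [stft_A_top hNM hM2 L y2 xt, stft_A_top hNM hM2 L y2 x, norm_mul, norm_mul] at hme2
    have hme1' := mul_left_cancel₀ habsN hme1
    have hme2' := mul_left_cancel₀ habsN hme2
    have hsgn1 := abs_real_cases
      (by rw [map_add, map_mul, map_mul, hcb0, hcbM, hcTM, hcT0])
      (by rw [map_add, map_mul, map_mul, hcb0, hcbM, hcAM, hcA0]) hme1'
    have hsgn2 := abs_real_cases
      (by rw [map_add, map_mul, map_mul, hcc0, hccM, hcTM, hcT0])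
      (by rw [map_add, map_mul, map_mul, hcc0, hccM, hcAM, hcA0]) hme2'
    obtain ⟨ε1, hε1, hsys1⟩ : ∃ ε1 : ℂ, (ε1 = 1 ∨ ε1 = -1) ∧
        b 0 * analyticHat N xt M + b M * analyticHat N xt 0
          = ε1 * (b 0 * analyticHat N x M + b M * analyticHat N x 0) := by
      rcases hsgn1 with h|h
      · exact ⟨1, Or.inl rfl, by rw [h]; ring⟩
      · exact ⟨-1, Or.inr rfl, by rw [h]; ring⟩
    obtain ⟨ε2, hε2, hsys2⟩ : ∃ ε2 : ℂ, (ε2 = 1 ∨ ε2 = -1) ∧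
        c 0 * analyticHat N xt M + c M * analyticHat N xt 0
          = ε2 * (c 0 * analyticHat N x M + c M * analyticHat N x 0) := by
      rcases hsgn2 with h|h
      · exact ⟨1, Or.inl rfl, by rw [h]; ring⟩
      · exact ⟨-1, Or.inr rfl, by rw [h]; ring⟩
    have hDT : Dc * analyticHat N xt M = ε1 * (c M * R1) - ε2 * (b M * R2) := by
      rw [hR1def, hR2def, hDcdef]
      linear_combination c M * hsys1 - b M * hsys2
    -- translate the middle measurements
    have hmt3 : ∀ k:ℕ, 1 ≤ k → k ≤ M - 1 → ∀ m ∈ ({m1, m2, m3} : Set ℤ),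
        (∑ l ∈ range (M - k + 1), b l * (ee N (m * L))^l * analyticHat N xt (k + l)) *
          (starRingEnd ℂ) (∑ l ∈ range (M - k + 1), b l * (ee N (m * L))^l * analyticHat N xt (k + l))
        = (∑ l ∈ range (M - k + 1), b l * (ee N (m * L))^l * analyticHat N x (k + l)) *
          (starRingEnd ℂ) (∑ l ∈ range (M - k + 1), b l * (ee N (m * L))^l * analyticHat N x (k + l)) := by
      intro k hk hk' m hm
      have h := hme3 k hk (by omega) m hm
      rw [stft_A_mid hNM hM2 L y1 xt hk hk' m, stft_A_mid hNM hM2 L y1 x hk hk' m,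
        norm_mul, norm_mul] at h
      exact abs_eq_mul_conj (mul_left_cancel₀ habsN h)
    -- Step gamma : the k = M-1 measurements
    have hMM1 : M - (M - 1) + 1 = 2 := by omega
    have hM1A : M - 1 + 1 = M := by omega
    have hgam : ∀ m ∈ ({m1, m2, m3} : Set ℤ),
        (b 0 * analyticHat N xt (M-1) + b 1 * ee N (m * L) * analyticHat N xt M) *
          (starRingEnd ℂ) (b 0 * analyticHat N xt (M-1) + b 1 * ee N (m * L) * analyticHat N xt M)
        = (b 0 * analyticHat N x (M-1) + b 1 * ee N (m * L) * analyticHat N x M) *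
          (starRingEnd ℂ) (b 0 * analyticHat N x (M-1) + b 1 * ee N (m * L) * analyticHat N x M) := by
      intro m hm
      have h := hmt3 (M-1) (by omega) (by omega) m hm
      rw [hMM1] at h
      simp only [Finset.sum_range_succ, Finset.sum_range_zero, zero_add, pow_zero, pow_one,
        mul_one, hM1A, Nat.add_zero] at h
      exact h
    have hmem1 : m1 ∈ ({m1, m2, m3} : Set ℤ) := Set.mem_insert _ _
    have hmem2 : m2 ∈ ({m1, m2, m3} : Set ℤ) :=
      Set.mem_insert_iff.mpr (Or.inr (Set.mem_insert _ _))
    have hmem3 : m3 ∈ ({m1, m2, m3} : Set ℤ) :=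
      Set.mem_insert_iff.mpr (Or.inr (Set.mem_insert_iff.mpr (Or.inr rfl)))
    have hq1 := hgam m1 hmem1
    have hq2 := hgam m2 hmem2
    have hq3 := hgam m3 hmem3
    have hpz : ∀ (p q : ℂ) (μ : ℂ), μ * (starRingEnd ℂ) μ = 1 →
        (b 0 * p + b 1 * μ * q) * (starRingEnd ℂ) (b 0 * p + b 1 * μ * q) * μ
        = (b 0 * (starRingEnd ℂ) (b 1) * p * (starRingEnd ℂ) q)
          + (b 0 * (starRingEnd ℂ) (b 0) * p * (starRingEnd ℂ) p
              + b 1 * (starRingEnd ℂ) (b 1) * q * (starRingEnd ℂ) q) * μ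
          + ((starRingEnd ℂ) (b 0) * b 1 * (starRingEnd ℂ) p * q) * μ^2 :=
      fun p q μ hu => polyize hu
    have hpoly : ∀ (μ : ℂ), μ * (starRingEnd ℂ) μ = 1 →
        (b 0 * analyticHat N xt (M-1) + b 1 * μ * analyticHat N xt M) *
          (starRingEnd ℂ) (b 0 * analyticHat N xt (M-1) + b 1 * μ * analyticHat N xt M)
        = (b 0 * analyticHat N x (M-1) + b 1 * μ * analyticHat N x M) *
          (starRingEnd ℂ) (b 0 * analyticHat N x (M-1) + b 1 * μ * analyticHat N x M) →
        (b 0 * (starRingEnd ℂ) (b 1) * analyticHat N xt (M-1) * (starRingEnd ℂ) (analyticHat N xt M))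
          + (b 0 * (starRingEnd ℂ) (b 0) * analyticHat N xt (M-1) * (starRingEnd ℂ) (analyticHat N xt (M-1))
              + b 1 * (starRingEnd ℂ) (b 1) * analyticHat N xt M * (starRingEnd ℂ) (analyticHat N xt M)) * μ
          + ((starRingEnd ℂ) (b 0) * b 1 * (starRingEnd ℂ) (analyticHat N xt (M-1)) * analyticHat N xt M) * μ^2
        = (b 0 * (starRingEnd ℂ) (b 1) * analyticHat N x (M-1) * (starRingEnd ℂ) (analyticHat N x M))
          + (b 0 * (starRingEnd ℂ) (b 0) * analyticHat N x (M-1) * (starRingEnd ℂ) (analyticHat N x (M-1))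
              + b 1 * (starRingEnd ℂ) (b 1) * analyticHat N x M * (starRingEnd ℂ) (analyticHat N x M)) * μ
          + ((starRingEnd ℂ) (b 0) * b 1 * (starRingEnd ℂ) (analyticHat N x (M-1)) * analyticHat N x M) * μ^2 := by
      intro μ hu h
      rw [← hpz _ _ μ hu, ← hpz _ _ μ hu, h]
    obtain ⟨hX, hY, hZ⟩ := quad3 hd12 hd13 hd23
      (hpoly μ1 hu1 hq1) (hpoly μ2 hu2 hq2) (hpoly μ3 hu3 hq3)
    -- extract the two scalar equations using realness
    have hE1 : analyticHat N xt (M-1) * analyticHat N xt M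
        = analyticHat N x (M-1) * analyticHat N x M := by
      rw [hcTM, hcAM] at hX
      have hbb : b 0 * (starRingEnd ℂ) (b 1) ≠ 0 := mul_ne_zero hb0 (conj_ne_zero hb1)
      have h1 : b 0 * (starRingEnd ℂ) (b 1) * (analyticHat N xt (M-1) * analyticHat N xt M)
          = b 0 * (starRingEnd ℂ) (b 1) * (analyticHat N x (M-1) * analyticHat N x M) := by
        linear_combination hX
      exact mul_left_cancel₀ hbb h1
    have hE2 : b 0 * (starRingEnd ℂ) (b 0) * (analyticHat N xt (M-1) * (starRingEnd ℂ) (analyticHat N xt (M-1)))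
          + b 1 * (starRingEnd ℂ) (b 1) * (analyticHat N xt M)^2
        = b 0 * (starRingEnd ℂ) (b 0) * (analyticHat N x (M-1) * (starRingEnd ℂ) (analyticHat N x (M-1)))
          + b 1 * (starRingEnd ℂ) (b 1) * (analyticHat N x M)^2 := by
      rw [hcTM, hcAM] at hY
      linear_combination hY
    have hE1c : (starRingEnd ℂ) (analyticHat N xt (M-1)) * analyticHat N xt M
        = (starRingEnd ℂ) (analyticHat N x (M-1)) * analyticHat N x M := by
      have h := congrArg (starRingEnd ℂ) hE1
      rw [map_mul, map_mul, hcTM, hcAM] at h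
      exact h
    -- rule out the mixed sign case
    have hε12 : ε1 = ε2 := by
      by_contra hne
      have hDT' : Dc * analyticHat N xt M = ε1 * g1x := by
        have hε2' : ε2 = -ε1 := by
          rcases hε1 with rfl|rfl <;> rcases hε2 with rfl|rfl <;>
            first | (exact absurd rfl hne) | norm_num
        rw [hg1xdef, hDT, hε2']
        ring
      have hsqT : Dc^2 * (analyticHat N xt M)^2 = g1x^2 := by
        have h := congrArg (· ^ 2) hDT'
        simp only [mul_pow] at h
        have hε1sq : ε1^2 = 1 := by rcases hε1 with rfl|rfl <;> norm_num
        rw [hε1sq, one_mul] at h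
        exact h
      have hTMne : analyticHat N xt M ≠ 0 := by
        intro h0
        apply mul_ne_zero hax1 haxM
        rw [← hE1, h0, mul_zero]
      -- multiply hE2 by (T M)^2 and substitute
      have hkey : ((analyticHat N x M)^2 - (analyticHat N xt M)^2) *
          (b 0 * (starRingEnd ℂ) (b 0) * (analyticHat N x (M-1) * (starRingEnd ℂ) (analyticHat N x (M-1)))
            - b 1 * (starRingEnd ℂ) (b 1) * (analyticHat N xt M)^2) = 0 := by
        have hprod : analyticHat N xt (M-1) * (starRingEnd ℂ) (analyticHat N xt (M-1)) *
            (analyticHat N xt M)^2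
            = analyticHat N x (M-1) * (starRingEnd ℂ) (analyticHat N x (M-1)) *
              (analyticHat N x M)^2 := by
          linear_combination ((starRingEnd ℂ) (analyticHat N xt (M-1)) * analyticHat N xt M) * hE1
            + (analyticHat N x (M-1) * analyticHat N x M) * hE1c
        linear_combination (analyticHat N xt M)^2 * hE2
          - (b 0 * (starRingEnd ℂ) (b 0)) * hprod
      rcases mul_eq_zero.1 hkey with h|h
      · apply hax3
        have : (analyticHat N x M)^2 = (analyticHat N xt M)^2 := by linear_combination h
        rw [this, hsqT]
        ring
      · apply hax4
        have : b 1 * (starRingEnd ℂ) (b 1) * (analyticHat N xt M)^2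
            = b 0 * (starRingEnd ℂ) (b 0) *
              (analyticHat N x (M-1) * (starRingEnd ℂ) (analyticHat N x (M-1))) := by
          linear_combination -h
        calc b 1 * (starRingEnd ℂ) (b 1) * g1x^2
            - b 0 * (starRingEnd ℂ) (b 0) * Dc^2 *
              (analyticHat N x (M-1) * (starRingEnd ℂ) (analyticHat N x (M-1)))
            = Dc^2 * (b 1 * (starRingEnd ℂ) (b 1) * (analyticHat N xt M)^2
                - b 0 * (starRingEnd ℂ) (b 0) *
                  (analyticHat N x (M-1) * (starRingEnd ℂ) (analyticHat N x (M-1))))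
              + b 1 * (starRingEnd ℂ) (b 1) * (g1x^2 - Dc^2 * (analyticHat N xt M)^2) := by ring
          _ = 0 := by rw [this, hsqT]; ring
    -- now ε1 = ε2
    have hε := hε1
    have hsq : ε1 * ε1 = 1 := by rcases hε1 with rfl|rfl <;> norm_num
    have hcε : (starRingEnd ℂ) ε1 = ε1 := by rcases hε1 with rfl|rfl <;> simp
    have hεne : ε1 ≠ 0 := by rcases hε1 with rfl|rfl <;> norm_num
    have hTM : analyticHat N xt M = ε1 * analyticHat N x M := by
      have h : Dc * analyticHat N xt M = Dc * (ε1 * analyticHat N x M) := by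
        rw [hDT, ← hε12, hR1def, hR2def, hDcdef]
        ring
      exact mul_left_cancel₀ hDc h
    have hT0 : analyticHat N xt 0 = ε1 * analyticHat N x 0 := by
      have h : b M * analyticHat N xt 0 = b M * (ε1 * analyticHat N x 0) := by
        linear_combination hsys1 - b 0 * hTM
      exact mul_left_cancel₀ hbM h
    have hTM1 : analyticHat N xt (M-1) = ε1 * analyticHat N x (M-1) := by
      have h : analyticHat N xt (M-1) * (ε1 * analyticHat N x M)
          = (ε1 * analyticHat N x (M-1)) * (ε1 * analyticHat N x M) := by
        linear_combination hE1 - analyticHat N xt (M-1) * hTM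
          - analyticHat N x (M-1) * analyticHat N x M * hsq
      exact mul_right_cancel₀ (mul_ne_zero hεne haxM) h
    -- downward induction
    have hstep : ∀ k : ℕ, 1 ≤ k → k ≤ M - 2 →
        (∀ j : ℕ, k + 1 ≤ j → j ≤ M → analyticHat N xt j = ε1 * analyticHat N x j) →
        analyticHat N xt k = ε1 * analyticHat N x k := by
      intro k hk1 hk2 ih
      set G : ℤ → ℂ := fun m => ∑ l ∈ Finset.Icc 1 (M - k),
        b l * (ee N (m * L))^l * analyticHat N x (k + l) with hGdef
      set v : ℂ := b 0 * (ε1 * analyticHat N xt k - analyticHat N x k) with hvdef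
      have hsumA : ∀ m : ℤ, ∑ l ∈ range (M - k + 1), b l * (ee N (m * L))^l * analyticHat N x (k + l)
          = (b 0 * analyticHat N x k + G m) := by
        intro m
        rw [sum_range_split (fun l => b l * (ee N (m * L))^l * analyticHat N x (k + l)) (M - k)]
        rw [hGdef]
        simp only [pow_zero, Nat.add_zero]
        ring
      have hsumT : ∀ m : ℤ, ∑ l ∈ range (M - k + 1), b l * (ee N (m * L))^l * analyticHat N xt (k + l)
          = ε1 * ((b 0 * analyticHat N x k + G m) + v) := by
        intro m
        rw [sum_range_split (fun l => b l * (ee N (m * L))^l * analyticHat N xt (k + l)) (M - k)]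
        have hGt : ∑ l ∈ Finset.Icc 1 (M - k), b l * (ee N (m * L))^l * analyticHat N xt (k + l)
            = ε1 * G m := by
          rw [hGdef, Finset.mul_sum]
          refine Finset.sum_congr rfl fun l hl => ?_
          obtain ⟨hl1, hl2⟩ := Finset.mem_Icc.1 hl
          rw [ih (k + l) (by omega) (by omega)]
          ring
        rw [hGt, hvdef]
        simp only [pow_zero, Nat.add_zero]
        linear_combination (-(b 0 * analyticHat N xt k)) * hsq
      have hmeq : ∀ m ∈ ({m1, m2, m3} : Set ℤ),
          ((b 0 * analyticHat N x k + G m) + v) *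
            (starRingEnd ℂ) ((b 0 * analyticHat N x k + G m) + v)
          = (b 0 * analyticHat N x k + G m) * (starRingEnd ℂ) (b 0 * analyticHat N x k + G m) := by
        intro m hm
        have h := hmt3 k hk1 (by omega) m hm
        rw [hsumT m, hsumA m] at h
        rw [map_mul, hcε] at h
        linear_combination h - (((b 0 * analyticHat N x k + G m) + v) *
          (starRingEnd ℂ) ((b 0 * analyticHat N x k + G m) + v)) * hsq
      have hWk := haxW k hk1 hk2
      have hGdiff : ∀ (m m' : ℤ), G m - G m' = ∑ l ∈ Finset.Icc 1 (M - k),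
          b l * ((ee N (m * L))^l - (ee N (m' * L))^l) * analyticHat N x (k + l) := by
        intro m m'
        rw [hGdef, ← Finset.sum_sub_distrib]
        refine Finset.sum_congr rfl fun l _ => ?_
        ring
      have hA12 : (b 0 * analyticHat N x k + G m1) - (b 0 * analyticHat N x k + G m2)
          = G m1 - G m2 := by ring
      have hv0 : v = 0 := by
        refine cancel_step (hmeq m1 hmem1) (hmeq m2 hmem2) (hmeq m3 hmem3) ?_
        rw [hA12, show (b 0 * analyticHat N x k + G m1) - (b 0 * analyticHat N x k + G m3)
          = G m1 - G m3 by ring]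
        rw [hGdiff m1 m2, hGdiff m1 m3]
        rw [hμ1def, hμ2def, hμ3def] at hWk
        exact hWk
      have hvv : ε1 * analyticHat N xt k - analyticHat N x k = 0 := by
        rcases mul_eq_zero.1 (hvdef ▸ hv0) with h|h
        · exact absurd h hb0
        · exact h
      have h3 : ε1 * (ε1 * analyticHat N xt k) = ε1 * analyticHat N x k := by
        rw [show ε1 * analyticHat N xt k = analyticHat N x k by linear_combination hvv]
      calc analyticHat N xt k = (ε1 * ε1) * analyticHat N xt k := by rw [hsq]; ring
        _ = ε1 * analyticHat N x k := by rw [mul_assoc]; exact h3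
    have hmain : ∀ i : ℕ, ∀ j : ℕ, 1 ≤ j → M - i ≤ j → j ≤ M →
        analyticHat N xt j = ε1 * analyticHat N x j := by
      intro i
      induction i with
      | zero =>
        intro j hj1 hj2 hj3
        have : j = M := by omega
        rw [this]; exact hTM
      | succ i ih =>
        intro j hj1 hj2 hj3
        by_cases hge : M - i ≤ j
        · exact ih j hj1 hge hj3
        · have hj : j = M - (i+1) := by omega
          by_cases hjM : j = M
          · rw [hjM]; exact hTM
          · by_cases hjM1 : j = M - 1
            · rw [hjM1]; exact hTM1
            · have hjle : j ≤ M - 2 := by omega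
              exact hstep j hj1 hjle (fun j' hj'1 hj'2 => ih j' (by omega) (by omega) hj'2)
    have hall : ∀ j : ℕ, analyticHat N xt j = ε1 * analyticHat N x j := by
      intro j
      by_cases hj0 : j = 0
      · rw [hj0]; exact hT0
      · by_cases hjM : j ≤ M
        · exact hmain M j (by omega) (by omega) hjM
        · rw [hat_gt hNM hM0 xt (by omega), hat_gt hNM hM0 x (by omega)]
          ring
    have hfinal : analyticSignal xt = fun n => ε1 * analyticSignal x n := by
      funext n
      calc analyticSignal xt n
          = (1/(N:ℂ)) * ∑ k ∈ range N, analyticHat N xt k *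
              Complex.exp (2 * (Real.pi:ℂ) * I * (k:ℂ) * (n.val:ℂ) / N) := rfl
        _ = (1/(N:ℂ)) * ∑ k ∈ range N, ε1 * (analyticHat N x k *
              Complex.exp (2 * (Real.pi:ℂ) * I * (k:ℂ) * (n.val:ℂ) / N)) := by
            congr 1
            refine Finset.sum_congr rfl fun k _ => ?_
            rw [hall k]; ring
        _ = ε1 * ((1/(N:ℂ)) * ∑ k ∈ range N, analyticHat N x k *
              Complex.exp (2 * (Real.pi:ℂ) * I * (k:ℂ) * (n.val:ℂ) / N)) := by
            rw [← Finset.mul_sum]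
            ring
        _ = ε1 * analyticSignal x n := rfl
    rcases hε with hεv|hεv
    · left
      rw [hfinal, hεv]
      funext n
      exact one_mul _
    · right
      rw [hfinal, hεv]
      funext n
      rw [Pi.neg_apply]
      ring
end

section
/- Let α, β ∈ ℂ satisfy α·β ≠ 0, α ≠ β, α·conj(β) ∉ ℝ, and |α| ≠ |β|. Then the 4×4 complex matrix M whose s-th row (s = 1, 2, 3, 4) is (|α|^{2s}, (α·conj(β))^s, (conj(α)·β)^s, |β|^{2s}) is invertible. -/
/-- invertibility of the 4×4 matrix built from powers of
`|α|²`, `α·conj β`, `conj α·β`, `|β|²`. -/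
theorem power_matrix_invertible (α β : ℂ) (h0 : α * β ≠ 0) (hne : α ≠ β)
    (hnr : (α * (starRingEnd ℂ) β).im ≠ 0)
    (habs : ‖α‖ ≠ ‖β‖) :
    (Matrix.of fun s j : Fin 4 =>
      ![((‖α‖ : ℂ)) ^ (2 * ((s : ℕ) + 1)),
        (α * (starRingEnd ℂ) β) ^ ((s : ℕ) + 1),
        ((starRingEnd ℂ) α * β) ^ ((s : ℕ) + 1),
        ((‖β‖ : ℂ)) ^ (2 * ((s : ℕ) + 1))] j).det ≠ 0 := by
  have hα : α ≠ 0 := left_ne_zero_of_mul h0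
  have hβ : β ≠ 0 := right_ne_zero_of_mul h0
  set v : Fin 4 → ℂ := ![((‖α‖ : ℂ))^2, α * (starRingEnd ℂ) β,
    (starRingEnd ℂ) α * β, ((‖β‖ : ℂ))^2] with hv
  -- imaginary parts
  have him0 : (v 0).im = 0 := by
    show (((‖α‖ : ℂ))^2).im = 0
    rw [← Complex.ofReal_pow]; exact Complex.ofReal_im _
  have him3 : (v 3).im = 0 := by
    show (((‖β‖ : ℂ))^2).im = 0
    rw [← Complex.ofReal_pow]; exact Complex.ofReal_im _
  have hconj : (starRingEnd ℂ) α * β = (starRingEnd ℂ) (α * (starRingEnd ℂ) β) := by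
    rw [map_mul]; simp
  have him2 : (v 2).im = -(v 1).im := by
    show ((starRingEnd ℂ) α * β).im = -(α * (starRingEnd ℂ) β).im
    rw [hconj, Complex.conj_im]
  have him1 : (v 1).im ≠ 0 := hnr
  have him2' : (v 2).im ≠ 0 := by rw [him2]; exact neg_ne_zero.mpr hnr
  -- pairwise distinctness
  have h01 : v 0 ≠ v 1 := fun h => him1 (by rw [← h, him0])
  have h02 : v 0 ≠ v 2 := fun h => him2' (by rw [← h, him0])
  have h31 : v 3 ≠ v 1 := fun h => him1 (by rw [← h, him3])
  have h32 : v 3 ≠ v 2 := fun h => him2' (by rw [← h, him3])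
  have h12 : v 1 ≠ v 2 := by
    intro h
    have : (v 1).im = -(v 1).im := by rw [← him2, h]
    have : (v 1).im = 0 := by linarith
    exact him1 this
  have h03 : v 0 ≠ v 3 := by
    intro h
    have heq : ((‖α‖ : ℂ))^2 = ((‖β‖ : ℂ))^2 := h
    have hr : (‖α‖)^2 = (‖β‖)^2 := by exact_mod_cast heq
    exact habs (by nlinarith [norm_nonneg α, norm_nonneg β])
  -- nonzeroness
  have hv0 : v 0 ≠ 0 := by
    show ((‖α‖ : ℂ))^2 ≠ 0
    exact pow_ne_zero _ (by exact_mod_cast norm_ne_zero_iff.mpr hα)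
  have hv1 : v 1 ≠ 0 := mul_ne_zero hα (by simpa using hβ)
  have hv2 : v 2 ≠ 0 := mul_ne_zero (by simpa using hα) hβ
  have hv3 : v 3 ≠ 0 := by
    show ((‖β‖ : ℂ))^2 ≠ 0
    exact pow_ne_zero _ (by exact_mod_cast norm_ne_zero_iff.mpr hβ)
  -- factor the matrix
  have hM : (Matrix.of fun s j : Fin 4 =>
      ![((‖α‖ : ℂ)) ^ (2 * ((s : ℕ) + 1)),
        (α * (starRingEnd ℂ) β) ^ ((s : ℕ) + 1),
        ((starRingEnd ℂ) α * β) ^ ((s : ℕ) + 1),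
        ((‖β‖ : ℂ)) ^ (2 * ((s : ℕ) + 1))] j)
      = Matrix.transpose (Matrix.diagonal v * Matrix.vandermonde v) := by
    ext s j
    fin_cases j <;>
      simp [v, Matrix.vandermonde, Matrix.diagonal_mul, Matrix.transpose_apply] <;>
      ring
  rw [hM, Matrix.det_transpose, Matrix.det_mul, Matrix.det_diagonal, Matrix.det_vandermonde]
  apply mul_ne_zero
  · exact Finset.prod_ne_zero_iff.mpr fun i _ => by
      fin_cases i <;> assumption
  · have hdist : ∀ i j : Fin 4, i < j → v j ≠ v i := by
      intro i j hij
      fin_cases i <;> fin_cases j <;>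
        first
          | exact absurd hij (by decide)
          | exact h01.symm
          | exact h02.symm
          | exact h03.symm
          | exact h12.symm
          | exact h31
          | exact h32
    refine Finset.prod_ne_zero_iff.mpr fun i _ => Finset.prod_ne_zero_iff.mpr fun j hj => ?_
    exact sub_ne_zero.mpr (hdist i j (Finset.mem_Ioi.mp hj))
end
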